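/- If M is an n×n Manin matrix over a noncommutative unital ring, then for every permutation p of {1,…,n}, the column determinant computed with columns taken in the order p(1),…,p(n) equals the column determinant computed in the standard column order: Σ_{σ∈S_n} sgn(σ) M_{σ(p(1)),p(1)}⋯M_{σ(p(n)),p(n)} = Σ_{σ∈S_n} sgn(σ) M_{σ(1),1}⋯M_{σ(n),n}. -/

import Mathlib

open Equiv

/-- The column determinant of an `n × n` matrix over a noncommutative ring, computed with
the columns taken (left to right) in the order `p 0, p 1, …, p (n-1)`. -/
def detColOrder {R : Type*} [Ring R] {n : ℕ} (p : Equiv.Perm (Fin n))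
    (M : Matrix (Fin n) (Fin n) R) : R :=
  ∑ σ : Equiv.Perm (Fin n),
    (Equiv.Perm.sign σ : ℤ) • (List.ofFn fun t => M (σ (p t)) (p t)).prod

section
variable {R : Type*} [Ring R]

set_option linter.unusedSectionVars false

lemma prod_ofFn_decomp {m : ℕ} (i : Fin m) (h : Fin (m+1) → R) :
    (List.ofFn h).prod =
      ((List.ofFn h).take i.val).prod * (h i.castSucc * h i.succ *
        ((List.ofFn h).drop (i.val + 2)).prod) := by
  have hlen : (List.ofFn h).length = m + 1 := List.length_ofFn
  have h1 : (i : ℕ) < (List.ofFn h).length := by rw [hlen]; omega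
  have h2 : (i : ℕ) + 1 < (List.ofFn h).length := by rw [hlen]; omega
  conv_lhs => rw [← List.take_append_drop i.val (List.ofFn h)]
  rw [List.prod_append, List.drop_eq_getElem_cons h1, List.prod_cons,
    List.drop_eq_getElem_cons h2, List.prod_cons]
  simp only [List.getElem_ofFn]
  have e1 : (⟨(i : ℕ), by omega⟩ : Fin (m+1)) = i.castSucc := Fin.ext rfl
  have e2 : (⟨(i : ℕ) + 1, by omega⟩ : Fin (m+1)) = i.succ := Fin.ext rfl
  rw [e1, e2, mul_assoc]

lemma take_ofFn_congr {m : ℕ} (k : ℕ) (h₁ h₂ : Fin m → R)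
    (H : ∀ t : Fin m, (t : ℕ) < k → h₁ t = h₂ t) :
    (List.ofFn h₁).take k = (List.ofFn h₂).take k := by
  apply List.ext_getElem
  · simp
  intro j hj1 hj2
  simp only [List.getElem_take, List.getElem_ofFn]
  apply H
  simp only [List.length_take, List.length_ofFn] at hj1
  simpa using lt_of_lt_of_le hj1 (min_le_left _ _)

lemma drop_ofFn_congr {m : ℕ} (k : ℕ) (h₁ h₂ : Fin m → R)
    (H : ∀ t : Fin m, k ≤ (t : ℕ) → h₁ t = h₂ t) :
    (List.ofFn h₁).drop k = (List.ofFn h₂).drop k := by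
  apply List.ext_getElem
  · simp
  intro j hj1 hj2
  simp only [List.getElem_drop, List.getElem_ofFn]
  exact H _ (by simp)

/-- Generic pairing lemma. -/
lemma sum_perm_pair {α : Type*} [DecidableEq α] [Fintype α] [LinearOrder α]
    (a b : α) (hab : a ≠ b) (F G : Equiv.Perm α → R)
    (key : ∀ σ, F σ + F (σ * Equiv.swap a b) = G σ + G (σ * Equiv.swap a b)) :
    ∑ σ : Equiv.Perm α, F σ = ∑ σ : Equiv.Perm α, G σ := by
  have split : ∀ F : Equiv.Perm α → R, ∑ σ : Equiv.Perm α, F σ =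
      ∑ σ ∈ Finset.univ.filter (fun σ : Equiv.Perm α => σ a < σ b),
        (F σ + F (σ * Equiv.swap a b)) := by
    intro F
    rw [Finset.sum_add_distrib,
      ← Finset.sum_filter_add_sum_filter_not Finset.univ (fun σ : Equiv.Perm α => σ a < σ b) F]
    congr 1
    apply Finset.sum_bij' (i := fun σ _ => σ * Equiv.swap a b)
      (j := fun σ _ => σ * Equiv.swap a b)
    · intro σ hσ
      simp only [Finset.mem_filter, Finset.mem_univ, true_and, not_lt] at hσ ⊢
      simp only [Equiv.Perm.mul_apply, Equiv.swap_apply_left, Equiv.swap_apply_right]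
      exact hσ.lt_of_ne (fun h => hab (σ.injective h).symm)
    · intro σ hσ
      simp only [Finset.mem_filter, Finset.mem_univ, true_and, not_lt] at hσ ⊢
      simp only [Equiv.Perm.mul_apply, Equiv.swap_apply_left, Equiv.swap_apply_right]
      exact hσ.le
    · intro σ _; simp [mul_assoc]
    · intro σ _; simp [mul_assoc]
    · intro σ _; simp [mul_assoc]
  rw [split F, split G]
  exact Finset.sum_congr rfl fun σ _ => key σ

lemma detColOrder_mul_adjSwap {m : ℕ} (M : Matrix (Fin (m+1)) (Fin (m+1)) R)
    (hcross : ∀ i j k l, M i j * M k l - M k l * M i j = M k j * M i l - M i l * M k j)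
    (q : Equiv.Perm (Fin (m+1))) (i : Fin m) :
    detColOrder (q * Equiv.swap i.castSucc i.succ) M = detColOrder q M := by
  set a := q i.castSucc with ha
  set b := q i.succ with hb
  have hab : a ≠ b := fun h => (Fin.castSucc_lt_succ (i := i)).ne (q.injective h)
  unfold detColOrder
  apply sum_perm_pair a b hab
  intro σ
  try dsimp only
  set s := Equiv.swap a b with hs
  set sw := Equiv.swap i.castSucc i.succ with hsw
  -- sign computations
  have hsgn : ((Equiv.Perm.sign (σ * s) : ℤ)) = -(Equiv.Perm.sign σ : ℤ) := by
    rw [Equiv.Perm.sign_mul, Equiv.Perm.sign_swap hab]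
    simp
  -- the four entry functions
  set h1 : Fin (m+1) → R := fun t => M (σ ((q * sw) t)) ((q * sw) t) with hh1
  set h2 : Fin (m+1) → R := fun t => M ((σ * s) ((q * sw) t)) ((q * sw) t) with hh2
  set h3 : Fin (m+1) → R := fun t => M (σ (q t)) (q t) with hh3
  set h4 : Fin (m+1) → R := fun t => M ((σ * s) (q t)) (q t) with hh4
  -- off the two positions, all four agree
  have hoff : ∀ t : Fin (m+1), t ≠ i.castSucc → t ≠ i.succ →
      h1 t = h3 t ∧ h2 t = h3 t ∧ h4 t = h3 t := by
    intro t ht1 ht2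
    have hswt : sw t = t := Equiv.swap_apply_of_ne_of_ne ht1 ht2
    have hqt : s (q t) = q t :=
      Equiv.swap_apply_of_ne_of_ne (fun h => ht1 (q.injective h)) (fun h => ht2 (q.injective h))
    constructor
    · simp [hh1, hh3, Equiv.Perm.mul_apply, hswt]
    constructor
    · simp [hh2, hh3, Equiv.Perm.mul_apply, hswt, hqt]
    · simp [hh4, hh3, Equiv.Perm.mul_apply, hqt]
  have hlow : ∀ t : Fin (m+1), (t : ℕ) < (i : ℕ) → t ≠ i.castSucc ∧ t ≠ i.succ := by
    intro t ht
    constructor <;> · intro h; rw [h] at ht; simp at ht; try omega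
  have hhigh : ∀ t : Fin (m+1), (i : ℕ) + 2 ≤ (t : ℕ) → t ≠ i.castSucc ∧ t ≠ i.succ := by
    intro t ht
    constructor <;> · intro h; rw [h] at ht; simp at ht; try omega
  -- common take and drop
  set X := ((List.ofFn h3).take i.val).prod with hX
  set Y := ((List.ofFn h3).drop (i.val + 2)).prod with hY
  have takes : ∀ h' : Fin (m+1) → R, (∀ t, t ≠ i.castSucc → t ≠ i.succ → h' t = h3 t) →
      ((List.ofFn h').take i.val).prod = X ∧ ((List.ofFn h').drop (i.val + 2)).prod = Y := by
    intro h' hagree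
    constructor
    · rw [hX, take_ofFn_congr i.val h' h3
        (fun t ht => hagree t (hlow t ht).1 (hlow t ht).2)]
    · rw [hY, drop_ofFn_congr (i.val + 2) h' h3
        (fun t ht => hagree t (hhigh t ht).1 (hhigh t ht).2)]
  obtain ⟨t1, d1⟩ := takes h1 (fun t u v => (hoff t u v).1)
  obtain ⟨t2, d2⟩ := takes h2 (fun t u v => (hoff t u v).2.1)
  obtain ⟨t4, d4⟩ := takes h4 (fun t u v => (hoff t u v).2.2)
  obtain ⟨t3, d3⟩ := takes h3 (fun _ _ _ => rfl)
  -- middle entries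
  have qsw1 : (q * sw) i.castSucc = b := by
    simp [hsw, Equiv.Perm.mul_apply, Equiv.swap_apply_left, hb]
  have qsw2 : (q * sw) i.succ = a := by
    simp [hsw, Equiv.Perm.mul_apply, Equiv.swap_apply_right, ha]
  have m1c : h1 i.castSucc = M (σ b) b := by rw [hh1]; simp [qsw1]
  have m1s : h1 i.succ = M (σ a) a := by rw [hh1]; simp [qsw2]
  have m2c : h2 i.castSucc = M (σ a) b := by
    rw [hh2]; simp [qsw1, Equiv.Perm.mul_apply, hs, Equiv.swap_apply_right]
  have m2s : h2 i.succ = M (σ b) a := by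
    rw [hh2]; simp [qsw2, Equiv.Perm.mul_apply, hs, Equiv.swap_apply_left]
  have m3c : h3 i.castSucc = M (σ a) a := by simp [hh3, ha]
  have m3s : h3 i.succ = M (σ b) b := by simp [hh3, hb]
  have m4c : h4 i.castSucc = M (σ b) a := by
    rw [hh4]; simp [Equiv.Perm.mul_apply, hs, Equiv.swap_apply_left, ha]
  have m4s : h4 i.succ = M (σ a) b := by
    rw [hh4]; simp [Equiv.Perm.mul_apply, hs, Equiv.swap_apply_right, hb]
  rw [prod_ofFn_decomp i h1, prod_ofFn_decomp i h2, prod_ofFn_decomp i h3,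
    prod_ofFn_decomp i h4, t1, d1, t2, d2, t3, d3, t4, d4,
    m1c, m1s, m2c, m2s, m3c, m3s, m4c, m4s, hsgn]
  set A := M (σ a) a
  set B := M (σ b) b
  set A' := M (σ b) a
  set B' := M (σ a) b
  have hcr : B * A - B' * A' = A * B - A' * B' := by
    have h' : A * B - B * A = A' * B' - B' * A' := hcross (σ a) a (σ b) b
    rw [sub_eq_sub_iff_sub_eq_sub]
    have h2' := congrArg Neg.neg h'
    simpa [neg_sub] using h2'
  have main : X * (B * A * Y) - X * (B' * A' * Y) = X * (A * B * Y) - X * (A' * B' * Y) := by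
    rw [← mul_sub, ← mul_sub, ← sub_mul, ← sub_mul, hcr]
  rw [neg_smul, neg_smul, ← sub_eq_add_neg, ← sub_eq_add_neg, ← smul_sub, ← smul_sub, main]
end

/-- For a Manin matrix `M` (entries in the same column commute, and cross-commutators of any
2×2 submatrix agree), the column determinant does not depend on the order of the columns in
the column expansion: for every permutation `p`,
`∑_σ sgn σ · M_{σ(p 1),p 1} ⋯ M_{σ(p n),p n} = ∑_σ sgn σ · M_{σ(1),1} ⋯ M_{σ(n),n}`. -/
theorem manin_detCol_column_order_invariant
    {R : Type*} [Ring R] {n : ℕ} (M : Matrix (Fin n) (Fin n) R)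
    (hcol : ∀ i k j, Commute (M i j) (M k j))
    (hcross : ∀ i j k l, M i j * M k l - M k l * M i j = M k j * M i l - M i l * M k j)
    (p : Equiv.Perm (Fin n)) :
    detColOrder p M = detColOrder 1 M := by
  cases n with
  | zero =>
    have : p = 1 := by ext x; exact x.elim0
    rw [this]
  | succ m =>
    have hp : p ∈ Submonoid.closure (Set.range fun i : Fin m ↦ swap i.castSucc i.succ) := by
      rw [Equiv.Perm.mclosure_swap_castSucc_succ]; trivial
    have key : ∀ q, detColOrder (q * p) M = detColOrder q M := by
      induction hp using Submonoid.closure_induction with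
      | mem x hx =>
        obtain ⟨i, rfl⟩ := hx
        exact fun q => detColOrder_mul_adjSwap M hcross q i
      | one => intro q; rw [mul_one]
      | mul x hx y hy ihx ihy =>
        intro q
        rw [← mul_assoc, ihy (q * x), ihx q]
      
    have := key 1
    rwa [one_mul] at this
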